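/- arXiv:2110.03472 — 3 statements merged into one kernel-verified Lean document; each statement's English description precedes it below -/
import Mathlib

section
/- Let D be a triangulated category with a t-structure. Every t-exact triangulated subcategory of D is H^0-stable (closed under the cohomology functor H^0). Conversely, if the t-structure is bounded, then every H^0-stable thick subcategory of D is t-exact. -/
open CategoryTheory Limits Pretriangulated ZeroObject

universe v u

namespace Paper

variable {C : Type u} [Category.{v} C] [Preadditive C] [HasZeroObject C]
  [HasShift C ℤ] [∀ n : ℤ, (CategoryTheory.shiftFunctor C n).Additive] [Pretriangulated C]
  [HasBinaryBiproducts C]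

/-- A class of objects closed under isomorphism. -/
def ClosedIso (P : C → Prop) : Prop := ∀ ⦃X Y : C⦄, (X ≅ Y) → P X → P Y

/-- A class of objects closed under extensions. -/
def ExtClosed (P : C → Prop) : Prop :=
  ∀ T : Triangle C, T ∈ (distTriang C) → P T.obj₁ → P T.obj₃ → P T.obj₂

/-- A suspended subcategory: additive (iso-closed, contains 0, closed under finite sums via
extensions), closed under the suspension `Σ = ⟦1⟧` and under extensions. -/
structure Suspended (P : C → Prop) : Prop where
  iso : ClosedIso P
  zero : P 0
  shift : ∀ ⦃X : C⦄, P X → P (X⟦(1:ℤ)⟧)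
  ext : ExtClosed P

/-- A t-structure `(L, G) = (D^{≤0}, D^{>0})`: Hom-orthogonality, every object is an extension,
`L` is suspended; both classes are closed under isomorphism. -/
structure IsTStr (L G : C → Prop) : Prop where
  isoL : ClosedIso L
  isoG : ClosedIso G
  zeroL : L 0
  homZero : ∀ ⦃X Y : C⦄, L X → G Y → ∀ f : X ⟶ Y, f = 0
  trunc : ∀ X : C, ∃ (A B : C) (f : A ⟶ X) (g : X ⟶ B) (h : B ⟶ A⟦(1:ℤ)⟧),
    Triangle.mk f g h ∈ (distTriang C) ∧ L A ∧ G B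
  shiftL : ∀ ⦃X : C⦄, L X → L (X⟦(1:ℤ)⟧)
  extL : ExtClosed L

/-- The right orthogonal `U^{⊥₀}` of a class of objects. -/
def rightOrth (U : C → Prop) (Y : C) : Prop := ∀ X : C, U X → ∀ f : X ⟶ Y, f = 0

/-- `Y ∈ P^{⊥_{≤ m}}`: `Hom(P, Σ^i Y) = 0` for all `i ≤ m`. -/
def perpLe (P : C) (m : ℤ) (Y : C) : Prop := ∀ i : ℤ, i ≤ m → ∀ f : P ⟶ Y⟦i⟧, f = 0

/-- `Y ∈ P^{⊥_{> m}}`: `Hom(P, Σ^i Y) = 0` for all `i > m`. -/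
def perpGt (P : C) (m : ℤ) (Y : C) : Prop := ∀ i : ℤ, m < i → ∀ f : P ⟶ Y⟦i⟧, f = 0

/-- `Y ∈ P^{⊥_ℤ}`: `Hom(P, Σ^i Y) = 0` for all integers `i`. -/
def perpZ (P : C) (Y : C) : Prop := ∀ i : ℤ, ∀ f : P ⟶ Y⟦i⟧, f = 0

/-- `X ∈ ^{⊥_{>0}}P`: `Hom(X, Σ^i P) = 0` for all `i > 0`. -/
def leftPerpGt0 (P : C) (X : C) : Prop := ∀ i : ℤ, 0 < i → ∀ f : X ⟶ P⟦i⟧, f = 0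

/-- `susp(P)`, the smallest suspended subcategory containing `P`. -/
def suspObj (P : C) (X : C) : Prop := ∀ U : C → Prop, Suspended U → U P → U X

/-- An additive subcategory closed under direct summands. -/
structure AddSub (U : C → Prop) : Prop where
  iso : ClosedIso U
  zero : U 0
  biprod : ∀ X Y : C, U X → U Y → U (X ⊞ Y)
  summand : ∀ X Y : C, U (X ⊞ Y) → U X

/-- `add(P)`: the additive closure of `P` (finite direct sums of direct summands). -/
def addObj (P : C) (X : C) : Prop := ∀ U : C → Prop, AddSub U → U P → U X

/-- A thick triangulated subcategory. -/
structure ThickSub (U : C → Prop) : Prop where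
  iso : ClosedIso U
  zero : U 0
  shift : ∀ ⦃X : C⦄, U X → ∀ n : ℤ, U (X⟦n⟧)
  ext : ExtClosed U
  summand : ∀ X Y : C, U (X ⊞ Y) → U X

/-- `thick(P)`: the smallest thick subcategory containing `P`. -/
def thickObj (P : C) (X : C) : Prop := ∀ U : C → Prop, ThickSub U → U P → U X

/-- A triangulated subcategory (iso-closed, shift-closed both ways, extension-closed). -/
structure TriangSub (U : C → Prop) : Prop where
  iso : ClosedIso U
  zero : U 0
  shift : ∀ ⦃X : C⦄, U X → ∀ n : ℤ, U (X⟦n⟧)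
  ext : ExtClosed U

/-- `P` is presilting: `Hom(P, Σ^n P) = 0` for all `n > 0`. -/
def Presilting (P : C) : Prop := ∀ n : ℤ, 0 < n → ∀ f : P ⟶ P⟦n⟧, f = 0

/-- `P` is partial silting: `(susp(P), P^{⊥_{≤0}})` is a t-structure and
`susp(P) ⊆ P^{⊥_{>0}}`. -/
def PartialSilting (P : C) : Prop :=
  IsTStr (suspObj P) (perpLe P 0) ∧ ∀ X : C, suspObj P X → perpGt P 0 X

/-- `S` is silting: partial silting with `susp(S) = S^{⊥_{>0}}`. -/
def Silting (S : C) : Prop :=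
  PartialSilting S ∧ ∀ X : C, suspObj S X ↔ perpGt S 0 X

/-- `X ∈ D^{≤ n}` for the t-structure with aisle `L`. -/
def DLe (L : C → Prop) (n : ℤ) (X : C) : Prop := L (X⟦n⟧)

/-- `X ∈ D^{> m}` for the t-structure with co-aisle `G`. -/
def DGt (G : C → Prop) (m : ℤ) (X : C) : Prop := G (X⟦m⟧)

/-- The t-structure `(L, G)` is bounded. -/
def BoundedTStr (L G : C → Prop) : Prop :=
  ∀ X : C, (∃ n : ℤ, DLe L n X) ∧ (∃ m : ℤ, DGt G m X)

/-- `H` is (a choice of) the `i`-th cohomology `H^i(X) = σ^{≤ i} σ^{> i-1} X` of `X` with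
respect to the t-structure `(L, G)`, expressed by the two truncation triangles. -/
def IsCohomAt (L G : C → Prop) (i : ℤ) (X H : C) : Prop :=
  ∃ (A B B' : C) (f : A ⟶ X) (g : X ⟶ B) (h : B ⟶ A⟦(1:ℤ)⟧)
    (f' : H ⟶ B) (g' : B ⟶ B') (h' : B' ⟶ H⟦(1:ℤ)⟧),
    Triangle.mk f g h ∈ (distTriang C) ∧ DLe L (i-1) A ∧ DGt G (i-1) B ∧
    Triangle.mk f' g' h' ∈ (distTriang C) ∧ DLe L i H ∧ DGt G i B'

/-- The heart `D^0 = D^{≤0} ∩ D^{>-1}` of the t-structure `(L, G)`. -/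
def Heart (L G : C → Prop) (X : C) : Prop := L X ∧ DGt G (-1) X

/-- A t-exact subcategory: a triangulated subcategory closed under the truncation `σ^{≤0}`
of the t-structure `(L, G)`. -/
def TExactSub (L G : C → Prop) (S : C → Prop) : Prop :=
  TriangSub S ∧
    ∀ (X A B : C) (f : A ⟶ X) (g : X ⟶ B) (h : B ⟶ A⟦(1:ℤ)⟧),
      S X → Triangle.mk f g h ∈ (distTriang C) → L A → G B → S A


/-- The class of objects `U` admits coreflections: every object has a couniversal morphism
from `U`, i.e. the inclusion of `U` admits a right adjoint. -/
def HasCoreflections (U : C → Prop) : Prop :=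
  ∀ X : C, ∃ (A : C) (ε : A ⟶ X), U A ∧
    ∀ A' : C, U A' → ∀ g : A' ⟶ X, ∃! g' : A' ⟶ A, g' ≫ ε = g

/-- `X` is a `2_S`-term object: `X ∈ add(S) * Σ add(S)`. -/
def TwoTerm (S X : C) : Prop :=
  ∃ (S₁ S₀ : C) (f : S₁ ⟶ S₀) (g : S₀ ⟶ X) (h : X ⟶ S₁⟦(1:ℤ)⟧),
    Triangle.mk f g h ∈ (distTriang C) ∧ addObj S S₁ ∧ addObj S S₀

/-- `X` is indecomposable. -/
def Indec (X : C) : Prop :=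
  ¬ IsZero X ∧ ∀ Y Z : C, (X ≅ Y ⊞ Z) → IsZero Y ∨ IsZero Z

/-- `add(A)` is contravariantly finite: every object admits a right `add(A)`-approximation. -/
def ContravFinAdd (A : C) : Prop :=
  ∀ X : C, ∃ (Q : C) (q : Q ⟶ X), addObj A Q ∧
    ∀ Q' : C, addObj A Q' → ∀ g : Q' ⟶ X, ∃ g' : Q' ⟶ Q, g' ≫ q = g

/-- `S` is a bounded silting object. -/
def BoundedSilting (S : C) : Prop :=
  Silting S ∧ BoundedTStr (suspObj S) (perpLe S 0)

/-- Hom-finiteness of `C` over a field `k`. -/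
def HomFinite (k : Type w) [Field k] [Linear k C] : Prop :=
  ∀ X Y : C, FiniteDimensional k (X ⟶ Y)

/-- The Krull–Schmidt property: every object is a finite direct sum of objects with local
endomorphism rings. -/
def KrullSchmidt : Prop :=
  ∀ X : C, ∃ l : List C, (∀ Y ∈ l, IsLocalRing (End Y)) ∧
    Nonempty (X ≅ l.foldr (· ⊞ ·) 0)

/-- A wide subcategory of the heart of the t-structure `(L, G)`: closed under isomorphisms,
extensions, kernels and cokernels (the latter two expressed via cones and cohomology). -/
structure HeartWide (L G W : C → Prop) : Prop where
  sub : ∀ ⦃X : C⦄, W X → Heart L G X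
  iso : ClosedIso W
  ext : ∀ (X Y Z : C) (f : X ⟶ Y) (g : Y ⟶ Z) (h : Z ⟶ X⟦(1:ℤ)⟧),
    W X → W Z → Heart L G Y → Triangle.mk f g h ∈ (distTriang C) → W Y
  kerCoker : ∀ (X Y Z : C) (f : X ⟶ Y) (g : Y ⟶ Z) (h : Z ⟶ X⟦(1:ℤ)⟧),
    W X → W Y → Triangle.mk f g h ∈ (distTriang C) →
    (∀ K : C, IsCohomAt L G (-1) Z K → W K) ∧ (∀ Q : C, IsCohomAt L G 0 Z Q → W Q)

/-- The subgroup of relations defining `K₀` of the thick subcategory `S`. -/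
def K0Rel (S : C → Prop) : AddSubgroup (FreeAbelianGroup C) :=
  AddSubgroup.closure
    {x | (∃ X : C, ¬ S X ∧ x = FreeAbelianGroup.of X) ∨
      ∃ T : Triangle C, T ∈ (distTriang C) ∧ S T.obj₁ ∧ S T.obj₂ ∧ S T.obj₃ ∧
        x = FreeAbelianGroup.of T.obj₂ - FreeAbelianGroup.of T.obj₁
          - FreeAbelianGroup.of T.obj₃}

/-- The Grothendieck group of the (thick) subcategory `S`. -/
abbrev K0 (S : C → Prop) := FreeAbelianGroup C ⧸ K0Rel S

/-- The class `[X]` in the Grothendieck group. -/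
def K0cls (S : C → Prop) (X : C) : K0 S :=
  QuotientAddGroup.mk (FreeAbelianGroup.of X)

/-- A `2_S`-term presilting sequence `(X₁, …, X_t)` in the ambient subcategory `Amb` with respect
to the silting object `S`, defined recursively: the last term `X` is an indecomposable `2_S`-term
presilting object, and the truncated sequence is a `2_{σ^{>0}_X T}`-term presilting sequence in
`Amb ∩ X^{⊥_ℤ}`, where `T = X ⊕ Q` is the Bongartz completion of `X`. -/
inductive PresiltSeq : (C → Prop) → C → List C → Prop
  | nil (Amb : C → Prop) (S : C) : PresiltSeq Amb S []
  | cons (Amb : C → Prop) (S X : C) (l : List C)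
      (hX : Amb X) (h2 : TwoTerm S X) (hpre : Presilting X) (hind : Indec X)
      -- Bongartz completion `T = X ⊞ Q`, via an approximation triangle `S → Q → X₀ → ΣS`
      (Q X₀ : C) (i : S ⟶ Q) (p : Q ⟶ X₀) (β : X₀ ⟶ S⟦(1:ℤ)⟧)
      (hB : Triangle.mk i p β ∈ (distTriang C)) (hX₀ : addObj X X₀)
      (happrox : ∀ X' : C, addObj X X' → ∀ g : X' ⟶ S⟦(1:ℤ)⟧, ∃ g', g' ≫ β = g)
      -- the truncation `T' = σ^{>0}_X (X ⊞ Q)`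
      (T' A : C) (f : A ⟶ X ⊞ Q) (g : X ⊞ Q ⟶ T') (h : T' ⟶ A⟦(1:ℤ)⟧)
      (hTr : Triangle.mk f g h ∈ (distTriang C)) (hA : suspObj X A) (hT' : perpLe X 0 T')
      (hrest : PresiltSeq (fun Y => Amb Y ∧ perpZ X Y) T' l) :
      PresiltSeq Amb S (l ++ [X])

set_option linter.unusedSectionVars false

section Helpers

variable {L G S : C → Prop}

/-- `(X⟦a⟧)⟦b⟧ ≅ X⟦c⟧` when `a + b = c`. -/
def shiftShiftIso (X : C) (a b c : ℤ) (h : a + b = c) : (X⟦a⟧)⟦b⟧ ≅ X⟦c⟧ :=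
  ((shiftFunctorAdd' C a b c h).app X).symm

def shiftZeroIso (X : C) : X⟦(0:ℤ)⟧ ≅ X := (shiftFunctorZero C ℤ).app X

lemma L_up (ht : IsTStr L G) {X : C} {m : ℤ} (hm : L (X⟦m⟧)) (k : ℕ) :
    L (X⟦m + (k:ℤ)⟧) := by
  induction k with
  | zero => simpa using hm
  | succ k ih =>
      exact ht.isoL (shiftShiftIso X (m + (k:ℤ)) 1 _ (by push_cast; ring)) (ht.shiftL ih)

lemma L_mono (ht : IsTStr L G) {X : C} {m m' : ℤ} (h : m ≤ m') (hm : L (X⟦m⟧)) :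
    L (X⟦m'⟧) := by
  obtain ⟨k, rfl⟩ := Int.le.dest h
  exact L_up ht hm k

lemma L_obj_shift (ht : IsTStr L G) {X : C} (hX : L X) {m : ℤ} (hm : 0 ≤ m) : L (X⟦m⟧) :=
  L_mono ht hm (ht.isoL (shiftZeroIso X).symm hX)

lemma homZero' (ht : IsTStr L G) {X Y : C} (k : ℤ) (hX : L (X⟦k⟧)) (hY : G (Y⟦k⟧))
    (f : X ⟶ Y) : f = 0 := by
  have h := ht.homZero hX hY ((shiftFunctor C k).map f)
  apply (shiftFunctor C k).map_injective
  simpa using h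

lemma transportTri (T : Triangle C) (hT : T ∈ distTriang C) {Z₁ Z₂ Z₃ : C}
    (a : Z₁ ≅ T.obj₁) (b : Z₂ ≅ T.obj₂) (c : Z₃ ≅ T.obj₃) :
    Triangle.mk (a.hom ≫ T.mor₁ ≫ b.inv) (b.hom ≫ T.mor₂ ≫ c.inv)
      (c.hom ≫ T.mor₃ ≫ (a.inv)⟦(1:ℤ)⟧') ∈ distTriang C := by
  refine isomorphic_distinguished _ hT _ (Triangle.isoMk _ _ a b c ?_ ?_ ?_)
  · exact (Category.assoc _ _ _).trans (congrArg (a.hom ≫ ·)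
      ((Category.assoc _ _ _).trans ((congrArg (T.mor₁ ≫ ·) b.inv_hom_id).trans
        (Category.comp_id _))))
  · exact (Category.assoc _ _ _).trans (congrArg (b.hom ≫ ·)
      ((Category.assoc _ _ _).trans ((congrArg (T.mor₂ ≫ ·) c.inv_hom_id).trans
        (Category.comp_id _))))
  · exact (Category.assoc _ _ _).trans (congrArg (c.hom ≫ ·)
      ((Category.assoc _ _ _).trans ((congrArg (T.mor₃ ≫ ·)
        (((shiftFunctor C (1:ℤ)).map_comp _ _).symm.trans
          ((congrArg (shiftFunctor C (1:ℤ)).map a.inv_hom_id).trans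
            ((shiftFunctor C (1:ℤ)).map_id _)))).trans (Category.comp_id _))))

lemma shiftTri (T : Triangle C) (hT : T ∈ distTriang C) (k : ℤ) :
    ∃ (f : T.obj₁⟦k⟧ ⟶ T.obj₂⟦k⟧) (g : T.obj₂⟦k⟧ ⟶ T.obj₃⟦k⟧)
      (h : T.obj₃⟦k⟧ ⟶ (T.obj₁⟦k⟧)⟦(1:ℤ)⟧),
      Triangle.mk f g h ∈ (distTriang C) :=
  ⟨_, _, _, Triangle.shift_distinguished T hT k⟩

lemma mem₃ (hS : TriangSub S) {T : Triangle C} (hT : T ∈ distTriang C)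
    (h₁ : S T.obj₁) (h₂ : S T.obj₂) : S T.obj₃ :=
  hS.ext T.rotate (rot_of_distTriang T hT) h₂ (hS.shift h₁ 1)

lemma mem₁ (hS : TriangSub S) {T : Triangle C} (hT : T ∈ distTriang C)
    (h₂ : S T.obj₂) (h₃ : S T.obj₃) : S T.obj₁ :=
  hS.ext T.invRotate (inv_rot_of_distTriang T hT) (hS.shift h₃ (-1)) h₂

lemma memZero (hS : TriangSub S) {X : C} (h : IsZero X) : S X :=
  hS.iso h.isoZero.symm hS.zero

lemma memShiftDown (hS : TriangSub S) {X : C} {k : ℤ} (h : S (X⟦k⟧)) : S X :=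
  hS.iso (shiftShiftIso X k (-k) 0 (by ring) ≪≫ shiftZeroIso X) (hS.shift h (-k))

lemma truncAt (ht : IsTStr L G) (X : C) (n : ℤ) :
    ∃ (X' Bn : C) (i : X' ⟶ X) (p : X ⟶ Bn) (d : Bn ⟶ X'⟦(1:ℤ)⟧),
      Triangle.mk i p d ∈ (distTriang C) ∧ L (X'⟦n⟧) ∧ G (Bn⟦n⟧) := by
  obtain ⟨A, B, f, g, h, hT, hA, hB⟩ := ht.trunc (X⟦n⟧)
  obtain ⟨f', g', h', hT'⟩ := shiftTri _ hT (-n)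
  have e : ((X⟦n⟧)⟦-n⟧ : C) ≅ X := shiftShiftIso X n (-n) 0 (by ring) ≪≫ shiftZeroIso X
  have h2 := transportTri _ hT' (Iso.refl _) e.symm (Iso.refl _)
  refine ⟨A⟦-n⟧, B⟦-n⟧, _, _, _, h2, ?_, ?_⟩
  · exact ht.isoL (shiftShiftIso A (-n) n 0 (by ring) ≪≫ shiftZeroIso A).symm hA
  · exact ht.isoG (shiftShiftIso B (-n) n 0 (by ring) ≪≫ shiftZeroIso B).symm hB

lemma key (ht : IsTStr L G) (hS : ThickSub S)
    (hst : ∀ X H : C, S X → IsCohomAt L G 0 X H → S H) :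
    ∀ n : ℕ, ∀ X : C, S X → L (X⟦(n:ℤ)⟧) →
      ∀ (A B : C) (f : A ⟶ X) (g : X ⟶ B) (h : B ⟶ A⟦(1:ℤ)⟧),
        Triangle.mk f g h ∈ (distTriang C) → L A → G B → S A := by
  have hTS : TriangSub S := ⟨hS.iso, hS.zero, hS.shift, hS.ext⟩
  intro n
  induction n with
  | zero =>
      intro X hSX hL A B f g h hT hLA hGB
      have hLX : L X := ht.isoL (shiftZeroIso X) (by simpa using hL)
      have hg : g = 0 := ht.homZero hLX hGB g
      have hzB : IsZero B := by
        obtain ⟨e, hid⟩ := Triangle.yoneda_exact₃ _ hT (𝟙 B)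
          (by rw [show (Triangle.mk f g h).mor₂ = g from rfl, hg]; exact zero_comp)
        have he : e = 0 := ht.homZero (ht.shiftL hLA) hGB e
        rw [he, comp_zero] at hid
        rw [IsZero.iff_id_eq_zero]
        exact hid
      exact mem₁ hTS hT hSX (memZero hTS hzB)
  | succ n IH =>
      intro X hSX hL A B f g h hT hLA hGB
      have hL' : L (X⟦(n:ℤ)+1⟧) := by
        have hc : (((n+1:ℕ)):ℤ) = (n:ℤ)+1 := by push_cast; ring
        rwa [hc] at hL
      -- truncation of X at level n
      obtain ⟨X', Bn, ι, π, δ, hT2, hX'n, hBnn⟩ := truncAt ht X (n:ℤ)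
      -- L (Bn⟦n+1⟧)
      have hLBn : L (Bn⟦(n:ℤ)+1⟧) := by
        obtain ⟨f₂, g₂, h₂, hT₂s⟩ :=
          shiftTri (Triangle.mk ι π δ).rotate (rot_of_distTriang _ hT2) ((n:ℤ)+1)
        have h3 : L (X'⟦(n:ℤ)+1+1⟧) := L_mono ht (by omega) hX'n
        have h4 : L ((X'⟦(1:ℤ)⟧)⟦(n:ℤ)+1⟧) :=
          ht.isoL (shiftShiftIso X' 1 ((n:ℤ)+1) ((n:ℤ)+1+1) (by ring)).symm h3
        exact ht.extL _ hT₂s hL' h4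
      -- cohomology H of X⟦n+1⟧ is in S
      obtain ⟨f₂, g₂, h₂, hT2s⟩ := shiftTri (Triangle.mk ι π δ) hT2 ((n:ℤ)+1)
      obtain ⟨H, B'', fH, gH, hH, hTH, hLH, hGB''⟩ := ht.trunc (Bn⟦(n:ℤ)+1⟧)
      have hSH : S H := by
        apply hst (X⟦(n:ℤ)+1⟧) H (hS.shift hSX ((n:ℤ)+1))
        refine ⟨X'⟦(n:ℤ)+1⟧, Bn⟦(n:ℤ)+1⟧, B'', f₂, g₂, h₂, fH, gH, hH, hT2s, ?_, ?_,
          hTH, ?_, ?_⟩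
        · exact ht.isoL (shiftShiftIso X' ((n:ℤ)+1) (0-1) (n:ℤ) (by ring)).symm hX'n
        · exact ht.isoG (shiftShiftIso Bn ((n:ℤ)+1) (0-1) (n:ℤ) (by ring)).symm hBnn
        · exact ht.isoL (shiftZeroIso H).symm hLH
        · exact ht.isoG (shiftZeroIso B'').symm hGB''
      -- B'' is zero, hence S (Bn⟦n+1⟧), hence S Bn, hence S X'
      have hg0 : gH = 0 := ht.homZero hLBn hGB'' gH
      have hzB'' : IsZero B'' := by
        obtain ⟨e, hid⟩ := Triangle.yoneda_exact₃ _ hTH (𝟙 B'')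
          (by rw [show (Triangle.mk fH gH hH).mor₂ = gH from rfl, hg0]; exact zero_comp)
        have he : e = 0 := ht.homZero (ht.shiftL hLH) hGB'' e
        rw [he, comp_zero] at hid
        rw [IsZero.iff_id_eq_zero]
        exact hid
      have hSBn : S Bn := memShiftDown hTS (hS.ext _ hTH hSH (memZero hTS hzB''))
      have hSX' : S X' := mem₁ hTS hT2 hSX hSBn
      -- truncate X' at level 0 and apply the induction hypothesis
      obtain ⟨A', Bs, ι', gs, hs, hT3, hLA', hGBs⟩ := ht.trunc X'
      have hSA' : S A' := IH X' hSX' hX'n A' Bs ι' gs hs hT3 hLA' hGBs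
      -- uniqueness: A ≅ A'
      have hfπ : f ≫ π = 0 :=
        homZero' ht (n:ℤ) (L_obj_shift ht hLA (Int.natCast_nonneg n)) hBnn (f ≫ π)
      obtain ⟨ψ, hψ⟩ : ∃ ψ : A ⟶ X', f = ψ ≫ ι :=
        Triangle.coyoneda_exact₂ _ hT2 f hfπ
      have hψgs : ψ ≫ gs = 0 := ht.homZero hLA hGBs (ψ ≫ gs)
      obtain ⟨ψ', hψ'⟩ : ∃ ψ' : A ⟶ A', ψ = ψ' ≫ ι' :=
        Triangle.coyoneda_exact₂ _ hT3 ψ hψgs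
      have hι'ι : (ι' ≫ ι) ≫ g = 0 := ht.homZero hLA' hGB ((ι' ≫ ι) ≫ g)
      obtain ⟨φ, hφ⟩ : ∃ φ : A' ⟶ A, ι' ≫ ι = φ ≫ f :=
        Triangle.coyoneda_exact₂ _ hT (ι' ≫ ι) hι'ι
      have hcomp1 : (ψ' ≫ φ) ≫ f = (𝟙 A) ≫ f := by
        rw [Category.id_comp, Category.assoc, ← hφ, ← Category.assoc, ← hψ']
        exact hψ.symm
      have key1 : ψ' ≫ φ = 𝟙 A := by
        have hdiff : (ψ' ≫ φ - 𝟙 A) ≫ f = 0 := by rw [Preadditive.sub_comp, hcomp1, sub_self]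
        obtain ⟨e, hee⟩ :=
          Triangle.coyoneda_exact₂ _ (inv_rot_of_distTriang _ hT) (ψ' ≫ φ - 𝟙 A) hdiff
        have he0 : e = 0 := homZero' ht 1 (ht.shiftL hLA)
          (ht.isoG (shiftShiftIso B (-1) 1 0 (by ring) ≪≫ shiftZeroIso B).symm hGB) e
        rw [he0, zero_comp] at hee
        exact sub_eq_zero.mp hee
      have hφψ : φ ≫ ψ = ι' := by
        have hdiff : (φ ≫ ψ - ι') ≫ ι = 0 := by
          rw [Preadditive.sub_comp, Category.assoc, ← hψ, ← hφ, sub_self]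
        obtain ⟨e, hee⟩ :=
          Triangle.coyoneda_exact₂ _ (inv_rot_of_distTriang _ hT2) (φ ≫ ψ - ι') hdiff
        have he0 : e = 0 := homZero' ht ((n:ℤ)+1) (L_obj_shift ht hLA' (by omega))
          (ht.isoG (shiftShiftIso Bn (-1) ((n:ℤ)+1) (n:ℤ) (by ring)).symm hBnn) e
        rw [he0, zero_comp] at hee
        exact sub_eq_zero.mp hee
      have key2 : φ ≫ ψ' = 𝟙 A' := by
        have hdiff : (φ ≫ ψ' - 𝟙 A') ≫ ι' = 0 := by
          rw [Preadditive.sub_comp, Category.assoc, ← hψ', hφψ, Category.id_comp, sub_self]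
        obtain ⟨e, hee⟩ :=
          Triangle.coyoneda_exact₂ _ (inv_rot_of_distTriang _ hT3) (φ ≫ ψ' - 𝟙 A') hdiff
        have he0 : e = 0 := homZero' ht 1 (ht.shiftL hLA')
          (ht.isoG (shiftShiftIso Bs (-1) 1 0 (by ring) ≪≫ shiftZeroIso Bs).symm hGBs) e
        rw [he0, zero_comp] at hee
        exact sub_eq_zero.mp hee
      exact hS.iso (Iso.mk φ ψ' key2 key1) hSA'

end Helpers

/-- Every t-exact triangulated subcategory is `H⁰`-stable; conversely, if the
t-structure is bounded, every `H⁰`-stable thick subcategory is t-exact. -/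
theorem statement3 (L G : C → Prop) (ht : IsTStr L G) :
    (∀ S : C → Prop, TExactSub L G S →
      ∀ X H : C, S X → IsCohomAt L G 0 X H → S H) ∧
    (BoundedTStr L G → ∀ S : C → Prop, ThickSub S →
      (∀ X H : C, S X → IsCohomAt L G 0 X H → S H) → TExactSub L G S) := by
  constructor
  · rintro S ⟨hTS, htex⟩ X H hX ⟨A, B, B', f, g, h, f', g', h', hT, hDA, hDB, hT2, hDH, hDB'⟩
    simp only [DLe, DGt] at hDA hDB hDH hDB'
    have hTr := inv_rot_of_distTriang _ (inv_rot_of_distTriang _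
      (inv_rot_of_distTriang _ hT))
    have hSA1 : S (A⟦(0:ℤ)-1⟧) :=
      htex (X⟦(0:ℤ)-1⟧) (A⟦(0:ℤ)-1⟧) (B⟦(0:ℤ)-1⟧) _ _ _ (hTS.shift hX ((0:ℤ)-1)) hTr hDA hDB
    have hSA : S A := hTS.iso (shiftShiftIso A ((0:ℤ)-1) 1 0 (by ring) ≪≫ shiftZeroIso A)
      (hTS.shift hSA1 1)
    have hSB : S B := mem₃ hTS hT hSA hX
    exact htex B H B' f' g' h' hSB hT2 (ht.isoL (shiftZeroIso H) hDH)
      (ht.isoG (shiftZeroIso B') hDB')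
  · rintro hbd S hS hst
    refine ⟨⟨hS.iso, hS.zero, hS.shift, hS.ext⟩, ?_⟩
    intro X A B f g h hSX hT hLA hGB
    obtain ⟨⟨m, hm⟩, -⟩ := hbd X
    have hL : L (X⟦(m.toNat:ℤ)⟧) := L_mono ht (Int.self_le_toNat m) hm
    exact key ht hS hst m.toNat X hSX hL A B f g h hT hLA hGB

end Paper
end

section
/- Two partial silting objects S₁ and S₂ of a triangulated category D generate the same t-structure (i.e., susp(S₁) = susp(S₂)) if and only if add(S₁) = add(S₂). -/
open CategoryTheory Limits Pretriangulated ZeroObject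

universe v u

namespace Paper

variable {C : Type u} [Category.{v} C] [Preadditive C] [HasZeroObject C]
  [HasShift C ℤ] [∀ n : ℤ, (CategoryTheory.shiftFunctor C n).Additive] [Pretriangulated C]
  [HasBinaryBiproducts C]

lemma suspObj_self (P : C) : suspObj P P := fun _ _ hP => hP

lemma addObj_self (P : C) : addObj P P := fun _ _ hP => hP

lemma suspObj_suspended (P : C) : Suspended (suspObj P) where
  iso := fun _ _ e hX U hU hP => hU.iso e (hX U hU hP)
  zero := fun U hU _ => hU.zero
  shift := fun _ hX U hU hP => hU.shift (hX U hU hP)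
  ext := fun T hT hone hthree U hU hP => hU.ext T hT (hone U hU hP) (hthree U hU hP)

lemma addObj_addSub (P : C) : AddSub (addObj P) where
  iso := fun _ _ e hX U hU hP => hU.iso e (hX U hU hP)
  zero := fun U hU _ => hU.zero
  biprod := fun X Y hX hY U hU hP => hU.biprod X Y (hX U hU hP) (hY U hU hP)
  summand := fun X Y hXY U hU hP => hU.summand X Y (hXY U hU hP)

lemma homZeroAddSub (Y : C) : AddSub (fun X : C => ∀ f : X ⟶ Y, f = 0) where
  iso := by
    intro X X' e hX f
    have h0 : e.hom ≫ f = 0 := hX _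
    calc f = e.inv ≫ e.hom ≫ f := by simp
    _ = 0 := by rw [h0, comp_zero]
  zero := fun f => (Limits.isZero_zero C).eq_of_src f 0
  biprod := by
    intro X X' hX hX' f
    apply biprod.hom_ext'
    · rw [hX (biprod.inl ≫ f), comp_zero]
    · rw [hX' (biprod.inr ≫ f), comp_zero]
  summand := by
    intro X X' hXX' f
    have h0 : biprod.fst ≫ f = 0 := hXX' _
    calc f = biprod.inl ≫ biprod.fst ≫ f := by simp
    _ = 0 := by rw [h0, comp_zero]

lemma addObj_hom_zero {P Y : C} (hbase : ∀ f : P ⟶ Y, f = 0) {Q : C} (hQ : addObj P Q) :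
    ∀ f : Q ⟶ Y, f = 0 :=
  hQ _ (homZeroAddSub Y) hbase

/-- The aisle of a t-structure consists precisely of the objects left-orthogonal to the
co-aisle. -/
lemma tstr_mem_of_orth {L G : C → Prop} (h : IsTStr L G) {X : C}
    (hX : ∀ W : C, G W → ∀ f : X ⟶ W, f = 0) : L X := by
  obtain ⟨A, B, f, g, h', hdist, hA, hB⟩ := h.trunc X
  have hg : g = 0 := hX B hB g
  obtain ⟨φ, hφ⟩ := Triangle.yoneda_exact₂ _ (rot_of_distTriang _ hdist) (𝟙 B)
    (by exact (by simpa using hg : g ≫ 𝟙 B = 0))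
  have hφ0 : φ = 0 := h.homZero (h.shiftL hA) hB φ
  have hB0 : IsZero B := by
    rw [IsZero.iff_id_eq_zero, hφ, hφ0, comp_zero]; rfl
  have : IsIso f := ((Triangle.mk f g h').isZero₃_iff_isIso₁ hdist).1 hB0
  exact h.isoL (asIso f) hA

/-- The aisle of a t-structure is additive and closed under direct summands. -/
lemma tstr_addSub {L G : C → Prop} (h : IsTStr L G) : AddSub L where
  iso := h.isoL
  zero := h.zeroL
  biprod := fun X Y hX hY => tstr_mem_of_orth h (fun W hW f => by
    apply biprod.hom_ext'
    · rw [h.homZero hX hW (biprod.inl ≫ f), comp_zero]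
    · rw [h.homZero hY hW (biprod.inr ≫ f), comp_zero])
  summand := fun X Y hXY => tstr_mem_of_orth h (fun W hW f => by
    have h0 : biprod.fst ≫ f = 0 := h.homZero hXY hW _
    calc f = biprod.inl ≫ biprod.fst ≫ f := by simp
    _ = 0 := by rw [h0, comp_zero])

lemma perpLe_hom_zero {P W : C} (hW : perpLe P 0 W) : ∀ f : P ⟶ W, f = 0 := fun f => by
  have h0 := hW 0 le_rfl (f ≫ (shiftFunctorZero C ℤ).inv.app W)
  calc f = (f ≫ (shiftFunctorZero C ℤ).inv.app W) ≫ (shiftFunctorZero C ℤ).hom.app W := by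
        rw [Category.assoc, Iso.inv_hom_id_app]; simp
  _ = 0 := by rw [h0, zero_comp]

lemma shift_hom_zero {A W : C} (hz : ∀ f : A ⟶ W, f = 0)
    (ε : A⟦(1:ℤ)⟧ ⟶ W⟦(1:ℤ)⟧) : ε = 0 := by
  rw [← (shiftFunctor C (1:ℤ)).map_preimage ε, hz ((shiftFunctor C (1:ℤ)).preimage ε),
    Functor.map_zero]

/-- The key lemma: if two partial silting objects generate the same suspended subcategory,
then `S₂ ∈ add S₁`. -/
lemma addObj_of_suspObj_eq {S₁ S₂ : C} (h₁ : PartialSilting S₁) (h₂ : PartialSilting S₂)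
    (hsusp : ∀ X : C, suspObj S₁ X ↔ suspObj S₂ X) : addObj S₁ S₂ := by
  have hLsusp : Suspended (suspObj S₁) := suspObj_suspended S₁
  have hT : IsTStr (suspObj S₁) (perpLe S₁ 0) := h₁.1
  have haddsusp : ∀ {Q : C}, addObj S₁ Q → suspObj S₁ Q :=
    fun hQ => hQ _ (tstr_addSub hT) (suspObj_self S₁)
  -- `U = add S₁ * Σ susp S₁`
  let U : C → Prop := fun X => ∃ (A P : C) (f : A ⟶ P) (g : P ⟶ X) (h : X ⟶ A⟦(1:ℤ)⟧),
    Triangle.mk f g h ∈ (distTriang C) ∧ suspObj S₁ A ∧ addObj S₁ P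
  have hUL : ∀ {X : C}, U X → suspObj S₁ X := by
    rintro X ⟨A, P, f, g, h, hdist, hA, hP⟩
    exact hLsusp.ext _ (rot_of_distTriang _ hdist) (haddsusp hP) (hLsusp.shift hA)
  have hU : Suspended U := by
    constructor
    · -- closed under isomorphisms
      rintro X Y e ⟨A, P, f, g, h, hdist, hA, hP⟩
      refine ⟨A, P, f, g ≫ e.hom, e.inv ≫ h, ?_, hA, hP⟩
      refine isomorphic_distinguished _ hdist _ ?_
      exact Triangle.isoMk _ _ (Iso.refl A) (Iso.refl P) e.symm (by exact (by simp : f ≫ 𝟙 P = 𝟙 A ≫ f))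
        (by exact (by simp : (g ≫ e.hom) ≫ e.inv = 𝟙 P ≫ g))
        (by exact (by simp : (e.inv ≫ h) ≫ (shiftFunctor C (1:ℤ)).map (𝟙 A) = e.inv ≫ h))
    · -- contains zero
      exact ⟨0, 0, 𝟙 0, 0, 0, contractible_distinguished (0 : C), hLsusp.zero,
        (addObj_addSub S₁).zero⟩
    · -- closed under suspension
      intro X hX
      exact ⟨X, 0, 0, 0, 𝟙 (X⟦(1:ℤ)⟧), contractible_distinguished₂ X, hUL hX,
        (addObj_addSub S₁).zero⟩
    · -- closed under extensions
      intro T hTd hX hZ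
      have hLX : suspObj S₁ T.obj₁ := hUL hX
      obtain ⟨A₁, P₁, f₁, g₁, k₁, hd₁, hA₁, hP₁⟩ := hX
      obtain ⟨A₂, P₂, f₂, g₂, k₂, hd₂, hA₂, hP₂⟩ := hZ
      -- lift the approximation `g₂ : P₂ ⟶ T.obj₃` through `T.mor₂`
      have hw : g₂ ≫ T.mor₃ = 0 :=
        addObj_hom_zero (h₁.2 T.obj₁ hLX 1 Int.one_pos) hP₂ _
      obtain ⟨t, ht⟩ := Triangle.coyoneda_exact₃ T hTd g₂ hw
      let s : P₁ ⊞ P₂ ⟶ T.obj₂ := biprod.desc (g₁ ≫ T.mor₁) t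
      obtain ⟨Cs, cg, ch, hTs⟩ := distinguished_cocone_triangle s
      have hinl : biprod.inl ≫ s = g₁ ≫ T.mor₁ := biprod.inl_desc _ _
      have hinr : biprod.inr ≫ s = t := biprod.inr_desc _ _
      -- every morphism from `Cs` to a suspended co-aisle object vanishes
      have hvanish : ∀ (W : C), perpLe S₁ 0 W → ∀ χ : Cs ⟶ W⟦(1:ℤ)⟧, χ = 0 := by
        intro W hW χ
        have h12 : s ≫ cg = 0 := comp_distTriang_mor_zero₁₂ _ hTs
        have hs0 : s ≫ (cg ≫ χ) = 0 := by
          rw [← Category.assoc, h12, zero_comp]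
        have hφ : cg ≫ χ = 0 := by
          have h1 : g₁ ≫ T.mor₁ ≫ (cg ≫ χ) = 0 := by
            rw [← Category.assoc, ← hinl, Category.assoc, hs0, comp_zero]
          obtain ⟨ε, hε⟩ := Triangle.yoneda_exact₂ _ (rot_of_distTriang _ hd₁)
            (T.mor₁ ≫ (cg ≫ χ)) h1
          have hε0 : ε = 0 := shift_hom_zero (fun f => hT.homZero hA₁ hW f) ε
          have hTφ : T.mor₁ ≫ (cg ≫ χ) = 0 := hε.trans (by rw [hε0]; exact comp_zero)
          obtain ⟨φ', hφ'⟩ := Triangle.yoneda_exact₂ T hTd (cg ≫ χ) hTφ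
          have htφ : t ≫ (cg ≫ χ) = 0 := by
            rw [← hinr, Category.assoc, hs0, comp_zero]
          have h2 : g₂ ≫ φ' = 0 := by
            calc g₂ ≫ φ' = t ≫ T.mor₂ ≫ φ' := by rw [ht, Category.assoc]
            _ = t ≫ (cg ≫ χ) := by rw [← hφ']
            _ = 0 := htφ
          obtain ⟨ε', hε'⟩ := Triangle.yoneda_exact₂ _ (rot_of_distTriang _ hd₂) φ' h2
          have hε'0 : ε' = 0 := shift_hom_zero (fun f => hT.homZero hA₂ hW f) ε'
          have hφ'0 : φ' = 0 := by rw [hε', hε'0, comp_zero]; rfl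
          rw [hφ', hφ'0, comp_zero]
        obtain ⟨δ, hδ⟩ := Triangle.yoneda_exact₂ _ (rot_of_distTriang _ hTs) χ
          (by exact hφ)
        have hδ0 : δ = 0 := shift_hom_zero
          (addObj_hom_zero (perpLe_hom_zero hW)
            ((addObj_addSub S₁).biprod _ _ hP₁ hP₂)) δ
        rw [hδ, hδ0, comp_zero]; rfl
      -- hence `Cs⟦-1⟧` lies in the aisle
      have hLA : suspObj S₁ (Cs⟦(-1:ℤ)⟧) := by
        apply tstr_mem_of_orth hT
        intro W hW ψ
        have hχ : (shiftEquiv C (1:ℤ)).counitIso.inv.app Cs ≫ ψ⟦(1:ℤ)⟧' = 0 :=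
          hvanish W hW _
        have hψ1 : ψ⟦(1:ℤ)⟧' = 0 := by
          have h' := congrArg (fun x => (shiftEquiv C (1:ℤ)).counitIso.hom.app Cs ≫ x) hχ
          exact (cancel_epi ((shiftEquiv C (1:ℤ)).counitIso.inv.app Cs)).1 (hχ.trans comp_zero.symm)
        exact (shiftFunctor C (1:ℤ)).map_eq_zero_iff.mp hψ1
      exact ⟨Cs⟦(-1:ℤ)⟧, P₁ ⊞ P₂, (Triangle.mk s cg ch).invRotate.mor₁, s,
        (Triangle.mk s cg ch).invRotate.mor₃, inv_rot_of_distTriang _ hTs, hLA,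
        (addObj_addSub S₁).biprod _ _ hP₁ hP₂⟩
  -- apply the minimality of `susp S₁` to `U`
  have hUS₁ : U S₁ := ⟨0, S₁, 0, 𝟙 S₁, 0, contractible_distinguished₁ S₁, hLsusp.zero,
    addObj_self S₁⟩
  have hUS₂ : U S₂ := (hsusp S₂).mpr (suspObj_self S₂) U hU hUS₁
  obtain ⟨A, P, f, g, k, hdist, hA, hP⟩ := hUS₂
  have hk : k = 0 := h₂.2 A ((hsusp A).mp hA) 1 Int.one_pos k
  obtain ⟨e, -, -⟩ := exists_iso_binaryBiproduct_of_distTriang _ hdist hk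
  have hb1 : addObj S₁ (A ⊞ S₂) := (addObj_addSub S₁).iso e hP
  have hb2 : addObj S₁ (S₂ ⊞ A) := (addObj_addSub S₁).iso (biprod.braiding A S₂) hb1
  exact (addObj_addSub S₁).summand _ _ hb2

/-- Two partial silting objects generate the same t-structure
(`susp(S₁) = susp(S₂)`) if and only if `add(S₁) = add(S₂)`. -/
theorem statement5 (S₁ S₂ : C) (h₁ : PartialSilting S₁) (h₂ : PartialSilting S₂) :
    (∀ X : C, suspObj S₁ X ↔ suspObj S₂ X) ↔ (∀ X : C, addObj S₁ X ↔ addObj S₂ X) := by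
  constructor
  · intro hsusp
    have k12 : addObj S₁ S₂ := addObj_of_suspObj_eq h₁ h₂ hsusp
    have k21 : addObj S₂ S₁ := addObj_of_suspObj_eq h₂ h₁ (fun X => (hsusp X).symm)
    intro X
    constructor
    · intro hX U hU hUS₂
      exact hX U hU (k21 U hU hUS₂)
    · intro hX U hU hUS₁
      exact hX U hU (k12 U hU hUS₁)
  · intro hadd X
    constructor
    · intro hX
      exact hX _ (suspObj_suspended S₂)
        ((hadd S₁).mp (addObj_self S₁) _ (tstr_addSub h₂.1) (suspObj_self S₂))
    · intro hX
      exact hX _ (suspObj_suspended S₁)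
        ((hadd S₂).mpr (addObj_self S₂) _ (tstr_addSub h₁.1) (suspObj_self S₁))

end Paper
end

section
/- Let D be a triangulated category with partial silting object P, and X ∈ U where (U,U^⊥) is any t-structure with susp(P) ⊆ U ⊆ P^{⊥_{>0}}. Then σ_P^{>0}X ≅ σ_P^{>m}X for every m ≥ 0, where σ_P^{>m} is the truncation of the shifted t-structure (Σ^{-m}susp(P), P^{⊥_{≤m}}). -/
open CategoryTheory Limits Pretriangulated ZeroObject

universe v u

namespace Paper

variable {C : Type u} [Category.{v} C] [Preadditive C] [HasZeroObject C]
  [HasShift C ℤ] [∀ n : ℤ, (CategoryTheory.shiftFunctor C n).Additive] [Pretriangulated C]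
  [HasBinaryBiproducts C]

lemma hom_shift_shift_zero {P A : C} {i j : ℤ}
    (hA : ∀ f : P ⟶ A⟦i + j⟧, f = 0) (f : P ⟶ (A⟦i⟧)⟦j⟧) : f = 0 := by
  have h := hA (f ≫ ((shiftFunctorAdd C i j).app A).inv)
  have h2 : f = (f ≫ ((shiftFunctorAdd C i j).app A).inv) ≫
      ((shiftFunctorAdd C i j).app A).hom := by simp
  rw [h2, h, zero_comp]

lemma suspObj_iso {P : C} {X Y : C} (e : X ≅ Y) (hX : suspObj P X) : suspObj P Y :=
  fun U hU hUP => hU.iso e (hX U hU hUP)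

lemma suspObj_shift_one {P : C} {X : C} (hX : suspObj P X) : suspObj P (X⟦(1:ℤ)⟧) :=
  fun U hU hUP => hU.shift (hX U hU hUP)

lemma suspObj_shift_nonneg {P A : C} (hA : suspObj P A) (m : ℤ) (hm : 0 ≤ m) :
    suspObj P (A⟦m⟧) := by
  obtain ⟨k, rfl⟩ := Int.eq_ofNat_of_zero_le hm
  clear hm
  induction k with
  | zero =>
    rw [Nat.cast_zero]
    exact suspObj_iso ((shiftFunctorZero C ℤ).app A).symm hA
  | succ k ih =>
    have e : ((k + 1 : ℕ) : ℤ) = (k : ℤ) + 1 := by push_cast; ring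
    rw [e]
    exact suspObj_iso ((shiftFunctorAdd' C (k : ℤ) 1 ((k : ℤ) + 1) rfl).app A).symm
      (suspObj_shift_one ih)

/-- If `A'⟦m⟧ ∈ susp(P)` then also `(A'⟦1⟧)⟦m⟧ ∈ susp(P)`. -/
lemma suspObj_shift_one_shift {P A' : C} (m : ℤ) (h : suspObj P (A'⟦m⟧)) :
    suspObj P ((A'⟦(1:ℤ)⟧)⟦m⟧) := by
  refine suspObj_iso ?_ (suspObj_shift_one h)
  exact ((shiftFunctorAdd' C m 1 (m+1) rfl).app A').symm ≪≫
    (shiftFunctorAdd' C 1 m (m+1) (by omega)).app A'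

/-- Hom-orthogonality for the shifted t-structure. -/
lemma homZero_shifted {P : C} (hP : PartialSilting P) (m : ℤ) {A' B' : C}
    (hA' : suspObj P (A'⟦m⟧)) (hB' : perpLe P m B') (f : A' ⟶ B') : f = 0 := by
  have hB'' : perpLe P 0 (B'⟦m⟧) := by
    intro i hi g
    exact hom_shift_shift_zero (fun k => hB' (m + i) (by omega) k) g
  have h0 := hP.1.homZero hA' hB'' ((shiftFunctor C m).map f)
  apply (shiftFunctor C m).map_injective
  rw [Functor.map_zero]
  exact h0

/-- The co-truncation `B` of an object of `U ⊆ P^{⊥_{>0}}` lies in `P^{⊥_ℤ}`. -/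
lemma perpZ_of_trunc {P : C} {X A B : C} {f : A ⟶ X} {g : X ⟶ B} {h : B ⟶ A⟦(1:ℤ)⟧}
    (hT : Triangle.mk f g h ∈ (distTriang C)) (hAgt : perpGt P 0 A)
    (hXgt : perpGt P 0 X) (hB : perpLe P 0 B) : perpZ P B := by
  intro i f0
  rcases le_or_gt i 0 with hi | hi
  · exact hB i hi f0
  · have hTs := Pretriangulated.Triangle.shift_distinguished _ hT i
    set Ts := (CategoryTheory.shiftFunctor (Triangle C) i).obj (Triangle.mk f g h) with hTsdef
    have hobj₃ : Ts.obj₃ = B⟦i⟧ := rfl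
    have hf0 : (f0 : P ⟶ Ts.obj₃) ≫ Ts.mor₃ = 0 := by
      have : ∀ q : P ⟶ (A⟦i⟧)⟦(1:ℤ)⟧, q = 0 :=
        hom_shift_shift_zero (fun k => hAgt (i + 1) (by omega) k)
      exact this _
    obtain ⟨g0, hg0⟩ := Pretriangulated.Triangle.coyoneda_exact₃ Ts hTs f0 hf0
    have : (g0 : P ⟶ X⟦i⟧) = 0 := hXgt i hi g0
    rw [hg0, this, zero_comp]; rfl

/-- For `X ∈ U`, where `(U, U^⊥)` is a t-structure with
`susp(P) ⊆ U ⊆ P^{⊥_{>0}}`, one has `σ_P^{>0}X ≅ σ_P^{>m}X` for every `m ≥ 0`. -/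
theorem statement9 (P : C) (hP : PartialSilting P) (U V : C → Prop)
    (hUV : IsTStr U V) (hV : ∀ Y : C, V Y ↔ rightOrth U Y)
    (h1 : ∀ X : C, suspObj P X → U X) (h2 : ∀ X : C, U X → perpGt P 0 X)
    (X : C) (hX : U X) (m : ℤ) (hm : 0 ≤ m)
    -- the truncation triangle for the t-structure `(susp(P), P^{⊥_{≤0}})`
    (A B : C) (f : A ⟶ X) (g : X ⟶ B) (h : B ⟶ A⟦(1:ℤ)⟧)
    (hT : Triangle.mk f g h ∈ (distTriang C)) (hA : suspObj P A) (hB : perpLe P 0 B)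
    -- the truncation triangle for the shifted t-structure `(Σ^{-m}susp(P), P^{⊥_{≤m}})`
    (Am Bm : C) (fm : Am ⟶ X) (gm : X ⟶ Bm) (hm' : Bm ⟶ Am⟦(1:ℤ)⟧)
    (hTm : Triangle.mk fm gm hm' ∈ (distTriang C)) (hAm : suspObj P (Am⟦m⟧))
    (hBm : perpLe P m Bm) :
    Nonempty (B ≅ Bm) := by
  -- `A ∈ Σ^{-m} susp(P)`
  have hA' : suspObj P (A⟦m⟧) := suspObj_shift_nonneg hA m hm
  -- `B ∈ P^{⊥_ℤ}`, in particular `B ∈ P^{⊥_{≤ m}}`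
  have hBZ : perpZ P B := perpZ_of_trunc hT (hP.2 A hA) (h2 X hX) hB
  have hB' : perpLe P m B := fun i _ f0 => hBZ i f0
  -- morphism of triangles `T ⟶ Tm` extending `𝟙 X`
  have hfgm : f ≫ gm = 0 := homZero_shifted hP m hA' hBm (f ≫ gm)
  obtain ⟨a, ha⟩ := Pretriangulated.Triangle.coyoneda_exact₂ _ hTm f hfgm
  obtain ⟨b, hb₁, _⟩ := Pretriangulated.complete_distinguished_triangle_morphism
    (Triangle.mk f g h) (Triangle.mk fm gm hm') hT hTm a (𝟙 X)
    (by exact (Category.comp_id _).trans ha)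
  -- morphism of triangles `Tm ⟶ T` extending `𝟙 X`
  have hfmg : fm ≫ g = 0 := homZero_shifted hP m hAm hB' (fm ≫ g)
  obtain ⟨a', ha'⟩ := Pretriangulated.Triangle.coyoneda_exact₂ _ hT fm hfmg
  obtain ⟨b', hb₁', _⟩ := Pretriangulated.complete_distinguished_triangle_morphism
    (Triangle.mk fm gm hm') (Triangle.mk f g h) hTm hT a' (𝟙 X)
    (by exact (Category.comp_id _).trans ha')
  change B ⟶ Bm at b
  change Bm ⟶ B at b'
  replace hb₁ : g ≫ b = gm := hb₁.trans (Category.id_comp _)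
  replace hb₁' : gm ≫ b' = g := hb₁'.trans (Category.id_comp _)
  -- `b ≫ b' = 𝟙 B`
  have hbb' : b ≫ b' = 𝟙 B := by
    have hc : g ≫ (b ≫ b' - 𝟙 B) = 0 := by
      rw [Preadditive.comp_sub, ← Category.assoc, hb₁, hb₁', Category.comp_id, sub_self]
    obtain ⟨e, he⟩ := Pretriangulated.Triangle.yoneda_exact₃ _ hT (b ≫ b' - 𝟙 B) hc
    have he0 : e = 0 := homZero_shifted hP m (suspObj_shift_one_shift m hA') hB' e
    have := he
    rw [he0, comp_zero] at this
    exact sub_eq_zero.mp this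
  -- `b' ≫ b = 𝟙 Bm`
  have hb'b : b' ≫ b = 𝟙 Bm := by
    have hc : gm ≫ (b' ≫ b - 𝟙 Bm) = 0 := by
      rw [Preadditive.comp_sub, ← Category.assoc, hb₁', hb₁, Category.comp_id, sub_self]
    obtain ⟨e, he⟩ := Pretriangulated.Triangle.yoneda_exact₃ _ hTm (b' ≫ b - 𝟙 Bm) hc
    have he0 : e = 0 := homZero_shifted hP m (suspObj_shift_one_shift m hAm) hBm e
    have := he
    rw [he0, comp_zero] at this
    exact sub_eq_zero.mp this
  exact ⟨⟨b, b', hbb', hb'b⟩⟩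

end Paper
end
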